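/- Let X ⊆ ℝ^n be a convex set, let x ∈ X, let g ∈ ℝ^n, h ∈ ℝ^m, let Q ∈ ℝ^{n×n} be symmetric positive definite, and let D : ℝ^n → ℝ^m be positively homogeneous (D(τ·d) = τ·D(d) for all τ > 0 and D(0) = 0). Define the direction-finding subproblem objective Φ(dx) := gᵀdx + hᵀD(dx) + ½ dxᵀ Q dx. If Φ(dx) ≥ 0 for every dx ∈ ℝ^n with x + dx ∈ X (i.e. the optimal value of the subproblem is zero), then Φ(dx) > 0 for every dx ≠ 0 with x + dx ∈ X; consequently dx = 0 is the unique globally optimal solution of the subproblem. -/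

import Mathlib

open Matrix

/-- Let `X ⊆ ℝⁿ` be convex, `x ∈ X`, `Q` symmetric positive definite,
and `D` positively homogeneous with `D 0 = 0`. If the direction-finding objective
`Φ(dx) = gᵀdx + hᵀD(dx) + ½ dxᵀQdx` is nonnegative over the feasible set
`{dx : x + dx ∈ X}` (i.e. the optimal value of the subproblem is zero), then
`Φ(dx) > 0` for every feasible `dx ≠ 0`; hence `dx = 0` is the unique global optimum. -/
theorem subproblem_zero_value_unique_optimum
    (n m : ℕ) (X : Set (Fin n → ℝ)) (hX : Convex ℝ X)
    (x : Fin n → ℝ) (hx : x ∈ X)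
    (g : Fin n → ℝ) (h : Fin m → ℝ)
    (Q : Matrix (Fin n) (Fin n) ℝ) (hQ : Q.PosDef)
    (D : (Fin n → ℝ) → (Fin m → ℝ))
    (hD : ∀ τ : ℝ, 0 < τ → ∀ v : Fin n → ℝ, D (τ • v) = τ • D v)
    (hD0 : D 0 = 0)
    (hopt : ∀ dx : Fin n → ℝ, x + dx ∈ X →
      0 ≤ g ⬝ᵥ dx + h ⬝ᵥ D dx + (1 / 2) * (dx ⬝ᵥ Q.mulVec dx)) :
    ∀ dx : Fin n → ℝ, dx ≠ 0 → x + dx ∈ X →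
      0 < g ⬝ᵥ dx + h ⬝ᵥ D dx + (1 / 2) * (dx ⬝ᵥ Q.mulVec dx) := by
  intro dx hdx hfeas
  set a : ℝ := g ⬝ᵥ dx + h ⬝ᵥ D dx with ha
  set b : ℝ := (1 / 2) * (dx ⬝ᵥ Q.mulVec dx) with hb
  have hbpos : 0 < b := by
    have := hQ.dotProduct_mulVec_pos hdx
    have h2 : 0 < dx ⬝ᵥ Q.mulVec dx := by
      simpa [Matrix.dotProduct_mulVec] using this
    positivity
  -- feasibility of scaled steps and the key inequality a + τ b ≥ 0 for τ ∈ (0,1]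
  have key : ∀ τ : ℝ, 0 < τ → τ ≤ 1 → 0 ≤ a + τ * b := by
    intro τ hτ hτ1
    have hfeas' : x + τ • dx ∈ X := by
      have : (1 - τ) • x + τ • (x + dx) ∈ X :=
        hX hx hfeas (by linarith) hτ.le (by ring)
      have heq : (1 - τ) • x + τ • (x + dx) = x + τ • dx := by
        simp [smul_add, sub_smul, one_smul]
        module
      rwa [heq] at this
    have h0 := hopt (τ • dx) hfeas'
    have hexp : g ⬝ᵥ (τ • dx) + h ⬝ᵥ D (τ • dx)
        + (1 / 2) * ((τ • dx) ⬝ᵥ Q.mulVec (τ • dx)) = τ * (a + τ * b) := by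
      rw [hD τ hτ, Matrix.mulVec_smul]
      simp [dotProduct_smul, smul_dotProduct, ha, hb]
      ring
    rw [hexp] at h0
    nlinarith
  have hanonneg : 0 ≤ a := by
    by_contra hneg
    push_neg at hneg
    set τ := min (1 : ℝ) (-a / (2 * b)) with hτdef
    have hτpos : 0 < τ := lt_min one_pos (div_pos (by linarith) (by linarith))
    have hτ1 : τ ≤ 1 := min_le_left _ _
    have h1 := key τ hτpos hτ1
    have hτle : τ ≤ -a / (2 * b) := min_le_right _ _
    have h2 : τ * (2 * b) ≤ -a := by
      rw [le_div_iff₀ (by linarith : (0:ℝ) < 2 * b)] at hτle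
      linarith
    nlinarith
  calc (0:ℝ) < a + b := by linarith
    _ = g ⬝ᵥ dx + h ⬝ᵥ D dx + (1 / 2) * (dx ⬝ᵥ Q.mulVec dx) := by rw [ha, hb]
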